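/- Let n, d, k be natural numbers with k ≤ n, let v : Fin n → Fin d → ℕ, and let T : Fin d → ℕ. The following are equivalent: (1) there exists a routing a : Fin n → Fin d → ℕ such that a i j ≤ v i j for all i, j (a i j of the v i j agents from origin i to destination j are routed via the free hub), ∑_{i} a i j ≤ T j for every j (the capacity of the arc from the free hub to destination j is respected), and the number of origins i for which a i j < v i j for some j (origins with at least one agent routed via the costly hub, each contributing cost exactly 1) is at most n − k; (2) there exists a finite set S' ⊆ Fin n with |S'| ≥ k such that ∑_{i ∈ S'} v i j ≤ T j for every j. -/
import Mathlib


/-- The combinatorial core of the reduction from Multidimensional Uniform 0/1 Knapsack to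
System Optimum Atomic Congestion on `K_{2,n+d}`: there is a routing `a` (numbers of agents
sent through the capacitated free hub) respecting `a i j ≤ v i j` and the capacities `T j`,
with at most `n - k` origins having some agent routed through the costly hub, iff there is a
set `S'` of at least `k` origins with `∑_{i ∈ S'} v i j ≤ T j` for every `j`. -/
theorem stmt_2 (n d k : ℕ) (hk : k ≤ n) (v : Fin n → Fin d → ℕ) (T : Fin d → ℕ) :
    (∃ a : Fin n → Fin d → ℕ,
      (∀ i j, a i j ≤ v i j) ∧
      (∀ j, ∑ i, a i j ≤ T j) ∧
      (Finset.univ.filter (fun i : Fin n => ∃ j, a i j < v i j)).card ≤ n - k) ↔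
    (∃ S' : Finset (Fin n), k ≤ S'.card ∧ ∀ j, ∑ i ∈ S', v i j ≤ T j) := by
  constructor
  · rintro ⟨a, hle, hcap, hcard⟩
    set B := Finset.univ.filter (fun i : Fin n => ∃ j, a i j < v i j) with hB
    refine ⟨Bᶜ, ?_, ?_⟩
    · have : Bᶜ.card = n - B.card := by
        simp [Finset.card_compl]
      omega
    · intro j
      have heq : ∀ i ∈ Bᶜ, v i j = a i j := by
        intro i hi
        simp only [Finset.mem_compl, hB, Finset.mem_filter, Finset.mem_univ, true_and,
          not_exists, not_lt] at hi
        exact le_antisymm (hi j) (hle i j)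
      calc ∑ i ∈ Bᶜ, v i j = ∑ i ∈ Bᶜ, a i j := Finset.sum_congr rfl heq
        _ ≤ ∑ i, a i j := Finset.sum_le_sum_of_subset (Finset.subset_univ _)
        _ ≤ T j := hcap j
  · rintro ⟨S', hS, hT⟩
    refine ⟨fun i j => if i ∈ S' then v i j else 0, fun i j => by dsimp only; split <;> simp, fun j => ?_, ?_⟩
    · calc ∑ i, (if i ∈ S' then v i j else 0) = ∑ i ∈ S', v i j := by
            rw [Finset.sum_ite_mem, Finset.univ_inter]
        _ ≤ T j := hT j
    · have hsub : (Finset.univ.filter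
          (fun i : Fin n => ∃ j, (if i ∈ S' then v i j else 0) < v i j)) ⊆ S'ᶜ := by
        intro i hi
        simp only [Finset.mem_filter, Finset.mem_univ, true_and] at hi
        obtain ⟨j, hj⟩ := hi
        by_contra h
        simp only [Finset.mem_compl, not_not] at h
        simp [h] at hj
      calc _ ≤ S'ᶜ.card := Finset.card_le_card hsub
        _ = n - S'.card := by simp [Finset.card_compl]
        _ ≤ n - k := by omega
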